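/- Let V be a real vector space of dimension r, Λ ⊂ V a lattice (free abelian subgroup of rank r spanning V), and q : V → ℝ a positive definite quadratic form. Let λ = min{q(x) : x ∈ Λ, x ≠ 0}. Then for any positive real T, the number of lattice points x ∈ Λ with q(x) ≤ T is at most (2·√(T/λ) + 1)^r. -/

import Mathlib

open Submodule in
/-- Lattice point counting: in an `r`-dimensional real vector space with a full-rank
lattice `Λ` and a positive definite quadratic form `q` whose minimum on nonzero lattice
points is `lam`, the number of lattice points with `q x ≤ T` is at most
`(2 * √(T/lam) + 1)^r`. -/
theorem stmt0 (V : Type*) [AddCommGroup V] [Module ℝ V] (r : ℕ)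
    (Λ : Submodule ℤ V) (b : Module.Basis (Fin r) ℤ Λ)
    (hspan : Submodule.span ℝ (Λ : Set V) = ⊤)
    (q : QuadraticForm ℝ V) (hq : q.PosDef)
    (lam : ℝ) (hlam : IsLeast {y : ℝ | ∃ x ∈ Λ, x ≠ 0 ∧ q x = y} lam)
    (T : ℝ) (hT : 0 < T) :
    {x : V | x ∈ Λ ∧ q x ≤ T}.Finite ∧
      (Nat.card {x : V | x ∈ Λ ∧ q x ≤ T} : ℝ) ≤ (2 * Real.sqrt (T / lam) + 1) ^ r := by
  -- lam is positive
  obtain ⟨⟨x₀, hx₀Λ, hx₀ne, hqx₀⟩, hlb⟩ := hlam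
  have hlam_pos : 0 < lam := hqx₀ ▸ hq x₀ hx₀ne
  -- the "parallelogram" inequality
  have hpar : ∀ x y : V, q (x - y) ≤ 2 * q x + 2 * q y := by
    intro x y
    have h1 : q (x + y) = q x + q y + QuadraticMap.polar (⇑q) x y :=
      QuadraticMap.map_add (⇑q) x y
    have h2 : q (x - y) = q x + q (-y) + QuadraticMap.polar (⇑q) x (-y) := by
      rw [sub_eq_add_neg]; exact QuadraticMap.map_add (⇑q) x (-y)
    have h3 : QuadraticMap.polar (⇑q) x (-y) = - QuadraticMap.polar (⇑q) x y :=
      QuadraticMap.polar_neg_right q x y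
    have h4 : q (-y) = q y := QuadraticMap.map_neg q y
    have h5 : 0 ≤ q (x + y) := hq.nonneg _
    linarith
  set a : ℝ := 2 * Real.sqrt (T / lam) with ha_def
  have ha : 0 ≤ a := by positivity
  set n : ℕ := Nat.floor a + 1 with hn_def
  have hna : a < (n : ℕ) := by
    rw [hn_def]
    push_cast
    exact Nat.lt_floor_add_one a
  have hn_le : (n : ℝ) ≤ a + 1 := by
    rw [hn_def]
    push_cast
    have := Nat.floor_le ha
    linarith
  set S : Set V := {x : V | x ∈ Λ ∧ q x ≤ T} with hS_def
  -- the map to coordinates modulo n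
  let f : S → (Fin r → ZMod n) := fun x i => ((b.repr ⟨x.1, x.2.1⟩ i : ℤ) : ZMod n)
  have hf : Function.Injective f := by
    intro x y hxy
    by_contra hne
    have hxyV : (x : V) ≠ (y : V) := fun h => hne (Subtype.ext h)
    set u : Λ := ⟨x.1, x.2.1⟩ - ⟨y.1, y.2.1⟩ with hu_def
    have hdvd : ∀ i, (n : ℤ) ∣ b.repr u i := by
      intro i
      have : ((b.repr ⟨x.1, x.2.1⟩ i : ℤ) : ZMod n) = ((b.repr ⟨y.1, y.2.1⟩ i : ℤ) : ZMod n) :=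
        congrFun hxy i
      have hz : ((b.repr u i : ℤ) : ZMod n) = 0 := by
        simp [hu_def, map_sub, sub_eq_zero, this]
      exact (ZMod.intCast_zmod_eq_zero_iff_dvd _ _).mp hz
    set z : Λ := ∑ i, (b.repr u i / (n : ℤ)) • b i with hz_def
    have hnz : (n : ℤ) • z = u := by
      rw [hz_def, Finset.smul_sum]
      have : ∀ i ∈ Finset.univ, (n : ℤ) • ((b.repr u i / (n : ℤ)) • b i)
          = (b.repr u i) • b i := by
        intro i _
        rw [smul_smul, Int.mul_ediv_cancel' (hdvd i)]
      rw [Finset.sum_congr rfl this, b.sum_repr]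
    have huV : (u : V) = (x : V) - (y : V) := rfl
    have hune : u ≠ 0 := by
      intro h
      apply hxyV
      have : (u : V) = 0 := by rw [h]; rfl
      rw [huV] at this
      exact sub_eq_zero.mp this
    have hzne : z ≠ 0 := by
      intro h
      apply hune
      rw [← hnz, h, smul_zero]
    have hzV_ne : (z : V) ≠ 0 := fun h => hzne (Subtype.ext h)
    have hlam_le : lam ≤ q (z : V) := hlb ⟨(z : V), z.2, hzV_ne, rfl⟩
    -- compute q (x - y)
    have hsmulV : ((x : V) - (y : V)) = (n : ℝ) • (z : V) := by
      have h1 : (((n : ℤ) • z : Λ) : V) = (x : V) - (y : V) := by rw [hnz, huV]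
      rw [← h1, Submodule.coe_smul, ← Int.cast_smul_eq_zsmul ℝ]
      norm_cast
    have hq_eq : q ((x : V) - (y : V)) = (n : ℝ) * (n : ℝ) * q (z : V) := by
      rw [hsmulV, QuadraticMap.map_smul, smul_eq_mul]
    have hub : q ((x : V) - (y : V)) ≤ 4 * T := by
      have := hpar (x : V) (y : V)
      have hx := x.2.2
      have hy := y.2.2
      change q (x : V) ≤ T at hx
      change q (y : V) ≤ T at hy
      linarith
    -- but n^2 * lam > 4 T
    have hs : Real.sqrt (T / lam) * Real.sqrt (T / lam) = T / lam :=
      Real.mul_self_sqrt (by positivity)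
    have h1 : a * a < (n : ℝ) * (n : ℝ) := mul_self_lt_mul_self ha hna
    have h2 : a * a * lam = 4 * T := by
      calc a * a * lam
          = 4 * (Real.sqrt (T / lam) * Real.sqrt (T / lam)) * lam := by rw [ha_def]; ring
        _ = 4 * (T / lam) * lam := by rw [hs]
        _ = 4 * T := by field_simp
    have hsq : 4 * T < (n : ℝ) * (n : ℝ) * lam := by nlinarith [hlam_pos]
    have hmono : (n : ℝ) * (n : ℝ) * lam ≤ (n : ℝ) * (n : ℝ) * q (z : V) :=
      mul_le_mul_of_nonneg_left hlam_le (by positivity)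
    linarith
  have hfin : S.Finite := by
    haveI : Finite S := Finite.of_injective f hf
    exact Set.toFinite S
  refine ⟨hfin, ?_⟩
  have hcard : Nat.card S ≤ n ^ r := by
    have := Nat.card_le_card_of_injective f hf
    rwa [Nat.card_eq_fintype_card (α := Fin r → ZMod n), Fintype.card_fun,
      ZMod.card, Fintype.card_fin] at this
  calc (Nat.card S : ℝ) ≤ (n : ℝ) ^ r := by exact_mod_cast hcard
    _ ≤ (a + 1) ^ r := by
        apply pow_le_pow_left₀ (by positivity) hn_le
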